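/- Let J ≥ 1, M > 0, δ ∈ ℝ^J, p ∈ ℝ^J with all p_j > 0, let σ_j(p, α) = exp(δ_j − α p_j) / (1 + Σ_{ℓ=1}^J exp(δ_ℓ − α p_ℓ)), let f be the log-normal density f(α) = (1/(α σ √(2π))) exp(−(log α − μ)²/(2σ²)) with μ ∈ ℝ, σ > 0, and define q_j(p) = M ∫₀^∞ σ_j(p, α) f(α) dα and L(x) = ∫₀^∞ e^{−αx} f(α) dα. Then for each j, q_j(λ p) / (M e^{δ_j} L(λ p_j)) → 1 as λ → ∞. -/

import Mathlib

set_option maxHeartbeats 1000000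


open MeasureTheory Real Filter

/-- Density of the log-normal distribution with parameters `μ` and `σ` on `(0, ∞)`. -/
noncomputable def lognormalPdf (μ σ : ℝ) (α : ℝ) : ℝ :=
  (1 / (α * σ * Real.sqrt (2 * Real.pi))) * Real.exp (-(Real.log α - μ) ^ 2 / (2 * σ ^ 2))

/-- Laplace transform of the log-normal distribution. -/
noncomputable def lnLaplace (μ σ : ℝ) (x : ℝ) : ℝ :=
  ∫ α in Set.Ioi (0 : ℝ), Real.exp (-α * x) * lognormalPdf μ σ α

/-- Logit choice probability of product `j` at prices `p`, mean utilities `δ`,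
and price coefficient `α`. -/
noncomputable def logitShare {J : ℕ} (δ : Fin J → ℝ) (j : Fin J) (p : Fin J → ℝ) (α : ℝ) : ℝ :=
  Real.exp (δ j - α * p j) / (1 + ∑ l, Real.exp (δ l - α * p l))

/-- Mixed-logit demand for product `j` with log-normal mixing over the price coefficient. -/
noncomputable def qLN {J : ℕ} (δ : Fin J → ℝ) (M μ σ : ℝ) (j : Fin J) (p : Fin J → ℝ) : ℝ :=
  M * ∫ α in Set.Ioi (0 : ℝ), logitShare δ j p α * lognormalPdf μ σ α

/-- Partial derivative of `F : (Fin J → ℝ) → ℝ` in the `k`-th coordinate at `p`. -/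
noncomputable def pd {J : ℕ} (F : (Fin J → ℝ) → ℝ) (k : Fin J) (p : Fin J → ℝ) : ℝ :=
  deriv (fun t => F (Function.update p k t)) (p k)


open Set

section auxiliary
variable {μ σ : ℝ}


lemma sqrt2pi_pos : 0 < Real.sqrt (2 * Real.pi) :=
  Real.sqrt_pos.2 (by positivity)

lemma lnpdf_pos (hσ : 0 < σ) {α : ℝ} (hα : 0 < α) : 0 < lognormalPdf μ σ α := by
  unfold lognormalPdf
  have := sqrt2pi_pos
  positivity

lemma lnpdf_nonneg (hσ : 0 < σ) {α : ℝ} (hα : α ∈ Ioi (0:ℝ)) : 0 ≤ lognormalPdf μ σ α :=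
  (lnpdf_pos hσ hα).le

lemma lnpdf_eq (hσ : 0 < σ) {α : ℝ} (hα : 0 < α) :
    lognormalPdf μ σ α = (σ * Real.sqrt (2 * Real.pi))⁻¹ *
      Real.exp (-(Real.log α) - (Real.log α - μ) ^ 2 / (2 * σ ^ 2)) := by
  unfold lognormalPdf
  have h1 : (1 : ℝ) / (α * σ * Real.sqrt (2 * Real.pi))
      = (σ * Real.sqrt (2 * Real.pi))⁻¹ * Real.exp (-Real.log α) := by
    rw [Real.exp_neg, Real.exp_log hα]
    have := sqrt2pi_pos
    field_simp
  rw [h1, mul_assoc, ← Real.exp_add]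
  ring_nf

lemma quad_bound1 (hσ : 0 < σ) (u : ℝ) :
    -u - (u - μ) ^ 2 / (2 * σ ^ 2) ≤ σ ^ 2 / 2 - μ := by
  have h2 : (0:ℝ) < 2 * σ ^ 2 := by positivity
  have key : -u - (u - μ) ^ 2 / (2 * σ ^ 2) - (σ ^ 2 / 2 - μ)
      = -((u - μ + σ ^ 2) ^ 2 / (2 * σ ^ 2)) := by
    field_simp; ring
  have h3 : (0:ℝ) ≤ (u - μ + σ ^ 2) ^ 2 / (2 * σ ^ 2) := by positivity
  linarith

lemma quad_bound2 (hσ : 0 < σ) (u : ℝ) :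
    u - (u - μ) ^ 2 / (2 * σ ^ 2) ≤ μ + σ ^ 2 / 2 := by
  have h2 : (0:ℝ) < 2 * σ ^ 2 := by positivity
  have key : u - (u - μ) ^ 2 / (2 * σ ^ 2) - (μ + σ ^ 2 / 2)
      = -((u - μ - σ ^ 2) ^ 2 / (2 * σ ^ 2)) := by
    field_simp; ring
  have h3 : (0:ℝ) ≤ (u - μ - σ ^ 2) ^ 2 / (2 * σ ^ 2) := by positivity
  linarith

lemma lnpdf_le_const (hσ : 0 < σ) {α : ℝ} (hα : 0 < α) :
    lognormalPdf μ σ α ≤ (σ * Real.sqrt (2 * Real.pi))⁻¹ * Real.exp (σ ^ 2 / 2 - μ) := by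
  rw [lnpdf_eq hσ hα]
  have h := quad_bound1 (μ := μ) hσ (Real.log α)
  have h2 : (0:ℝ) < (σ * Real.sqrt (2 * Real.pi))⁻¹ := by
    have := sqrt2pi_pos; positivity
  exact mul_le_mul_of_nonneg_left (exp_le_exp.2 h) h2.le

lemma lnpdf_le_inv_sq (hσ : 0 < σ) {α : ℝ} (hα : 0 < α) :
    lognormalPdf μ σ α ≤ (σ * Real.sqrt (2 * Real.pi))⁻¹ * Real.exp (μ + σ ^ 2 / 2) * (α ^ 2)⁻¹ := by
  rw [lnpdf_eq hσ hα]
  have key : -(Real.log α) - (Real.log α - μ) ^ 2 / (2 * σ ^ 2)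
      ≤ (μ + σ ^ 2 / 2) + Real.log ((α ^ 2)⁻¹) := by
    rw [Real.log_inv, Real.log_pow]
    have h := quad_bound2 (μ := μ) hσ (Real.log α)
    push_cast; linarith
  have h2 : (0:ℝ) < (σ * Real.sqrt (2 * Real.pi))⁻¹ := by
    have := sqrt2pi_pos; positivity
  calc (σ * Real.sqrt (2 * Real.pi))⁻¹ * Real.exp (-(Real.log α) - (Real.log α - μ) ^ 2 / (2 * σ ^ 2))
      ≤ (σ * Real.sqrt (2 * Real.pi))⁻¹ * Real.exp ((μ + σ ^ 2 / 2) + Real.log ((α ^ 2)⁻¹)) :=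
        mul_le_mul_of_nonneg_left (exp_le_exp.2 key) h2.le
    _ = (σ * Real.sqrt (2 * Real.pi))⁻¹ * Real.exp (μ + σ ^ 2 / 2) * (α ^ 2)⁻¹ := by
        rw [Real.exp_add, Real.exp_log (by positivity)]; ring

lemma lnpdf_measurable : Measurable (lognormalPdf μ σ) := by
  unfold lognormalPdf
  apply Measurable.mul
  · simp_rw [one_div]
    exact ((measurable_id.mul_const _).mul_const _).inv
  · exact Real.measurable_exp.comp
      ((((Real.measurable_log.sub measurable_const).pow_const 2).neg).div_const _)

lemma integrableOn_lnpdf (hσ : 0 < σ) : IntegrableOn (lognormalPdf μ σ) (Ioi 0) := by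
  have hmeas := lnpdf_measurable (μ := μ) (σ := σ)
  have h1 : IntegrableOn (lognormalPdf μ σ) (Ioc 0 1) := by
    apply Integrable.mono' (g := fun _ => (σ * Real.sqrt (2 * Real.pi))⁻¹ * Real.exp (σ ^ 2 / 2 - μ))
      (integrableOn_const (by simp [Real.volume_Ioc]))
      hmeas.aestronglyMeasurable.restrict
    filter_upwards [ae_restrict_mem measurableSet_Ioc] with α hα
    rw [Real.norm_eq_abs, abs_of_nonneg (lnpdf_nonneg hσ hα.1)]
    exact lnpdf_le_const hσ hα.1
  have h2 : IntegrableOn (lognormalPdf μ σ) (Ioi 1) := by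
    apply Integrable.mono' (g := fun α => (σ * Real.sqrt (2 * Real.pi))⁻¹ * Real.exp (μ + σ ^ 2 / 2) * (α ^ (-2:ℝ)))
    · exact (integrableOn_Ioi_rpow_of_lt (by norm_num) one_pos).const_mul _
    · exact hmeas.aestronglyMeasurable.restrict
    · filter_upwards [ae_restrict_mem measurableSet_Ioi] with α hα
      have h0 : (0:ℝ) < α := lt_trans one_pos hα
      rw [Real.norm_eq_abs, abs_of_nonneg (lnpdf_nonneg hσ h0)]
      have := lnpdf_le_inv_sq (μ := μ) hσ h0
      rwa [Real.rpow_neg h0.le, Real.rpow_two]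
  have := h1.union h2
  rwa [Ioc_union_Ioi_eq_Ioi zero_le_one] at this


lemma integrable_exp_lnpdf (hσ : 0 < σ) {x : ℝ} (hx : 0 ≤ x) :
    IntegrableOn (fun α => Real.exp (-α * x) * lognormalPdf μ σ α) (Ioi 0) := by
  apply Integrable.mono' (integrableOn_lnpdf hσ)
  · exact ((Real.measurable_exp.comp (measurable_id.neg.mul_const x)).mul
      lnpdf_measurable).aestronglyMeasurable.restrict
  · filter_upwards [ae_restrict_mem measurableSet_Ioi] with α hα
    rw [Real.norm_eq_abs, abs_of_nonneg (mul_nonneg (Real.exp_nonneg _) (lnpdf_nonneg hσ hα))]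
    calc Real.exp (-α * x) * lognormalPdf μ σ α
        ≤ 1 * lognormalPdf μ σ α := by
          apply mul_le_mul_of_nonneg_right _ (lnpdf_nonneg hσ hα)
          rw [← Real.exp_zero]
          exact Real.exp_le_exp.2 (by nlinarith [mem_Ioi.1 hα])
      _ = _ := one_mul _

lemma lnLaplace_nonneg (hσ : 0 < σ) (x : ℝ) : 0 ≤ lnLaplace μ σ x := by
  apply setIntegral_nonneg measurableSet_Ioi
  exact fun α hα => mul_nonneg (Real.exp_nonneg _) (lnpdf_nonneg hσ hα)

lemma lnLaplace_pos (hσ : 0 < σ) {x : ℝ} (hx : 0 ≤ x) : 0 < lnLaplace μ σ x := by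
  rw [lnLaplace, setIntegral_pos_iff_support_of_nonneg_ae ?h1 (integrable_exp_lnpdf hσ hx)]
  case h1 =>
    filter_upwards [ae_restrict_mem measurableSet_Ioi] with α hα
    exact mul_nonneg (Real.exp_nonneg _) (lnpdf_nonneg hσ hα)
  have hsub : Ioi (0:ℝ) ⊆ Function.support (fun α => Real.exp (-α * x) * lognormalPdf μ σ α) ∩ Ioi 0 :=
    fun α hα => ⟨(mul_pos (Real.exp_pos _) (lnpdf_pos hσ hα)).ne', hα⟩
  refine lt_of_lt_of_le ?_ (measure_mono hsub)
  simp [Real.volume_Ioi]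

lemma lnpdf_mono (hσ : 0 < σ) {α t : ℝ} (hα : 0 < α) (hat : α ≤ t)
    (ht : t ≤ Real.exp (μ - σ ^ 2)) : lognormalPdf μ σ α ≤ lognormalPdf μ σ t := by
  have ht0 : 0 < t := lt_of_lt_of_le hα hat
  rw [lnpdf_eq hσ hα, lnpdf_eq hσ ht0]
  have hC : (0:ℝ) < (σ * Real.sqrt (2 * Real.pi))⁻¹ := by
    have := sqrt2pi_pos; positivity
  apply mul_le_mul_of_nonneg_left _ hC.le
  apply Real.exp_le_exp.2
  set u := Real.log α with hu
  set v := Real.log t with hv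
  have huv : u ≤ v := Real.log_le_log hα hat
  have hvm : v ≤ μ - σ ^ 2 := by
    rw [hv, ← Real.log_exp (μ - σ ^ 2)]
    exact Real.log_le_log ht0 ht
  have h2 : (0:ℝ) < 2 * σ ^ 2 := by positivity
  have key : (-v - (v - μ) ^ 2 / (2 * σ ^ 2)) - (-u - (u - μ) ^ 2 / (2 * σ ^ 2))
      = (v - u) * (-(2 * σ ^ 2) - (u + v - 2 * μ)) / (2 * σ ^ 2) := by
    field_simp; ring
  have hpos : 0 ≤ (v - u) * (-(2 * σ ^ 2) - (u + v - 2 * μ)) / (2 * σ ^ 2) := by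
    apply div_nonneg _ h2.le
    apply mul_nonneg (by linarith)
    nlinarith
  linarith

lemma F_le (hσ : 0 < σ) {t : ℝ} (ht0 : 0 < t) (ht : t ≤ Real.exp (μ - σ ^ 2)) :
    ∫ α in Ioc (0:ℝ) t, lognormalPdf μ σ α ≤ t * lognormalPdf μ σ t := by
  have hint : IntegrableOn (lognormalPdf μ σ) (Ioc 0 t) :=
    (integrableOn_lnpdf hσ).mono_set Ioc_subset_Ioi_self
  calc ∫ α in Ioc (0:ℝ) t, lognormalPdf μ σ α
      ≤ ∫ _ in Ioc (0:ℝ) t, lognormalPdf μ σ t := by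
        apply setIntegral_mono_on hint (integrableOn_const (by simp [Real.volume_Ioc])) measurableSet_Ioc
        exact fun α hα => lnpdf_mono hσ hα.1 hα.2 ht
    _ = t * lognormalPdf μ σ t := by
        rw [setIntegral_const, Real.volume_real_Ioc_of_le ht0.le, smul_eq_mul]
        ring_nf

lemma L_lower (hσ : 0 < σ) {y w Q : ℝ} (hy : 0 ≤ y) (hw : 0 < w)
    (hQ : ∀ α ∈ Ioc w (2 * w), |Real.log α - μ| ≤ Q) :
    (σ * Real.sqrt (2 * Real.pi))⁻¹ / 2 * Real.exp (-(2 * w * y) - Q ^ 2 / (2 * σ ^ 2))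
      ≤ lnLaplace μ σ y := by
  have hC : (0:ℝ) < (σ * Real.sqrt (2 * Real.pi))⁻¹ := by
    have := sqrt2pi_pos; positivity
  have hsub : Ioc w (2 * w) ⊆ Ioi (0:ℝ) := fun α hα => lt_trans hw hα.1
  have step1 : ∫ α in Ioc w (2 * w), Real.exp (-α * y) * lognormalPdf μ σ α
      ≤ lnLaplace μ σ y := by
    apply setIntegral_mono_set (integrable_exp_lnpdf hσ hy)
    · filter_upwards [ae_restrict_mem measurableSet_Ioi] with α hα
      exact mul_nonneg (Real.exp_nonneg _) (lnpdf_nonneg hσ hα)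
    · exact Filter.Eventually.of_forall hsub
  refine le_trans ?_ step1
  have hconst : ∀ α ∈ Ioc w (2 * w),
      Real.exp (-(2 * w) * y) * ((1 / (2 * w * σ * Real.sqrt (2 * Real.pi))) * Real.exp (-Q ^ 2 / (2 * σ ^ 2)))
        ≤ Real.exp (-α * y) * lognormalPdf μ σ α := by
    intro α hα
    have hα0 : 0 < α := lt_trans hw hα.1
    apply mul_le_mul
    · exact Real.exp_le_exp.2 (by nlinarith [hα.2])
    · unfold lognormalPdf
      apply mul_le_mul
      · rw [div_le_div_iff₀ (by positivity) (by positivity)]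
        have := sqrt2pi_pos
        nlinarith [hα.2, sqrt2pi_pos, mul_pos hσ sqrt2pi_pos]
      · have h2σ : (0:ℝ) < 2 * σ ^ 2 := by positivity
        have habs := abs_le.1 (hQ α hα)
        have hsq : (Real.log α - μ) ^ 2 ≤ Q ^ 2 := sq_le_sq' habs.1 habs.2
        exact Real.exp_le_exp.2 (by gcongr)
      · exact Real.exp_nonneg _
      · positivity
    · positivity
    · exact Real.exp_nonneg _
  calc (σ * Real.sqrt (2 * Real.pi))⁻¹ / 2 * Real.exp (-(2 * w * y) - Q ^ 2 / (2 * σ ^ 2))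
      = (volume (Ioc w (2*w))).toReal • (Real.exp (-(2 * w) * y) * ((1 / (2 * w * σ * Real.sqrt (2 * Real.pi))) * Real.exp (-Q ^ 2 / (2 * σ ^ 2)))) := by
        have he : Real.exp (-(2 * w * y) - Q ^ 2 / (2 * σ ^ 2))
            = Real.exp (-(2 * w) * y) * Real.exp (-Q ^ 2 / (2 * σ ^ 2)) := by
          rw [← Real.exp_add]; congr 1; ring
        rw [Real.volume_Ioc, ENNReal.toReal_ofReal (by linarith), smul_eq_mul, he]
        have := sqrt2pi_pos
        field_simp
        ring
    _ ≤ ∫ α in Ioc w (2 * w), Real.exp (-α * y) * lognormalPdf μ σ α := by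
        rw [← measureReal_def, ← setIntegral_const]
        apply setIntegral_mono_on (integrableOn_const (by simp [Real.volume_Ioc]))
          ((integrable_exp_lnpdf hσ hy).mono_set hsub) measurableSet_Ioc hconst

lemma L_upper (hσ : 0 < σ) {a b x t : ℝ} (ha : 0 ≤ a) (hab : a ≤ b) (hx : 0 < x)
    (ht0 : 0 < t) (ht : t ≤ Real.exp (μ - σ ^ 2)) :
    lnLaplace μ σ (b * x) ≤ t * lognormalPdf μ σ t
      + Real.exp (-((b - a) * t * x)) * lnLaplace μ σ (a * x) := by
  have hb : 0 ≤ b := le_trans ha hab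
  have hbx : 0 ≤ b * x := mul_nonneg hb hx.le
  have hax : 0 ≤ a * x := mul_nonneg ha hx.le
  have hint := integrable_exp_lnpdf (μ := μ) hσ hbx
  have hint1 : IntegrableOn (fun α => Real.exp (-α * (b*x)) * lognormalPdf μ σ α) (Ioc 0 t) :=
    hint.mono_set Ioc_subset_Ioi_self
  have hint2 : IntegrableOn (fun α => Real.exp (-α * (b*x)) * lognormalPdf μ σ α) (Ioi t) :=
    hint.mono_set (Ioi_subset_Ioi ht0.le)
  have hsplit : lnLaplace μ σ (b * x)
      = (∫ α in Ioc (0:ℝ) t, Real.exp (-α * (b*x)) * lognormalPdf μ σ α)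
        + ∫ α in Ioi t, Real.exp (-α * (b*x)) * lognormalPdf μ σ α := by
    rw [lnLaplace, ← Ioc_union_Ioi_eq_Ioi ht0.le]
    exact setIntegral_union (Ioc_disjoint_Ioi le_rfl) measurableSet_Ioi hint1 hint2
  rw [hsplit]
  have h1 : (∫ α in Ioc (0:ℝ) t, Real.exp (-α * (b*x)) * lognormalPdf μ σ α)
      ≤ t * lognormalPdf μ σ t := by
    refine le_trans ?_ (F_le hσ ht0 ht)
    apply setIntegral_mono_on hint1
      ((integrableOn_lnpdf hσ).mono_set Ioc_subset_Ioi_self) measurableSet_Ioc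
    intro α hα
    calc Real.exp (-α * (b*x)) * lognormalPdf μ σ α
        ≤ 1 * lognormalPdf μ σ α := by
          apply mul_le_mul_of_nonneg_right _ (lnpdf_nonneg hσ hα.1)
          rw [← Real.exp_zero]
          exact Real.exp_le_exp.2 (by nlinarith [hα.1])
      _ = _ := one_mul _
  have h2 : (∫ α in Ioi t, Real.exp (-α * (b*x)) * lognormalPdf μ σ α)
      ≤ Real.exp (-((b - a) * t * x)) * lnLaplace μ σ (a * x) := by
    have step : (∫ α in Ioi t, Real.exp (-α * (b*x)) * lognormalPdf μ σ α)
        ≤ ∫ α in Ioi t, Real.exp (-((b - a) * t * x)) * (Real.exp (-α * (a*x)) * lognormalPdf μ σ α) := by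
      apply setIntegral_mono_on hint2
        (((integrable_exp_lnpdf (μ := μ) hσ hax).mono_set (Ioi_subset_Ioi ht0.le)).const_mul _)
        measurableSet_Ioi
      intro α hα
      have hf := lnpdf_nonneg (μ := μ) hσ (lt_trans ht0 hα)
      have hta : t ≤ α := (mem_Ioi.1 hα).le
      have hexp : Real.exp (-α * (b*x)) ≤ Real.exp (-((b - a) * t * x)) * Real.exp (-α * (a*x)) := by
        rw [← Real.exp_add]
        refine Real.exp_le_exp.2 ?_
        have hkey : 0 ≤ (b - a) * (α - t) * x :=
          mul_nonneg (mul_nonneg (sub_nonneg.2 hab) (sub_nonneg.2 hta)) hx.le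
        nlinarith [hkey]
      calc Real.exp (-α * (b*x)) * lognormalPdf μ σ α
          ≤ (Real.exp (-((b - a) * t * x)) * Real.exp (-α * (a*x))) * lognormalPdf μ σ α :=
            mul_le_mul_of_nonneg_right hexp hf
        _ = _ := mul_assoc _ _ _
    refine step.trans ?_
    rw [MeasureTheory.integral_const_mul]
    apply mul_le_mul_of_nonneg_left _ (Real.exp_nonneg _)
    apply setIntegral_mono_set (integrable_exp_lnpdf hσ hax)
    · filter_upwards [ae_restrict_mem measurableSet_Ioi] with α hα
      exact mul_nonneg (Real.exp_nonneg _) (lnpdf_nonneg hσ hα)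
    · exact Filter.Eventually.of_forall (Ioi_subset_Ioi ht0.le)
  linarith

lemma t_mul_pdf (hσ : 0 < σ) {t : ℝ} (ht : 0 < t) :
    t * lognormalPdf μ σ t
      = (σ * Real.sqrt (2 * Real.pi))⁻¹ * Real.exp (-(Real.log t - μ) ^ 2 / (2 * σ ^ 2)) := by
  unfold lognormalPdf
  have := sqrt2pi_pos
  field_simp

lemma L_ratio_tendsto (hσ : 0 < σ) {a b : ℝ} (ha : 0 < a) (hab : a < b) :
    Tendsto (fun x => lnLaplace μ σ (b * x) / lnLaplace μ σ (a * x)) atTop (nhds 0) := by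
  set c₀ : ℝ := |μ| + Real.log 2 with hc₀
  -- the dominating function
  have hG : Tendsto (fun x : ℝ => Real.exp (-((b - a) * Real.sqrt (Real.log x))) + 2 / x)
      atTop (nhds 0) := by
    have hsqrt : Tendsto Real.sqrt atTop atTop := by
      rw [tendsto_atTop_atTop]
      intro C
      refine ⟨(max 0 C) ^ 2, fun x hx => ?_⟩
      calc C ≤ max 0 C := le_max_right _ _
        _ = Real.sqrt ((max 0 C) ^ 2) := (Real.sqrt_sq (le_max_left _ _)).symm
        _ ≤ Real.sqrt x := Real.sqrt_le_sqrt hx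
    have h1 : Tendsto (fun x : ℝ => Real.exp (-((b - a) * Real.sqrt (Real.log x)))) atTop (nhds 0) := by
      apply Real.tendsto_exp_atBot.comp
      apply tendsto_neg_atTop_atBot.comp
      exact (hsqrt.comp Real.tendsto_log_atTop).const_mul_atTop (by linarith)
    have h2 : Tendsto (fun x : ℝ => 2 / x) atTop (nhds (0:ℝ)) :=
      tendsto_const_nhds.div_atTop tendsto_id
    simpa using h1.add h2
  apply squeeze_zero' ?nonneg ?bound hG
  case nonneg =>
    filter_upwards [eventually_ge_atTop (1:ℝ)] with x hx
    exact div_nonneg (lnLaplace_nonneg hσ _) (lnLaplace_nonneg hσ _)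
  case bound =>
    have evlog := Real.tendsto_log_atTop
    have evloglog : Tendsto (fun x : ℝ => Real.log (Real.log x)) atTop atTop :=
      Real.tendsto_log_atTop.comp Real.tendsto_log_atTop
    have evsmall : ∀ᶠ x : ℝ in atTop, Real.log (Real.log x) ≤ Real.log x / 3 := by
      have h := Real.isLittleO_log_id_atTop.def (by norm_num : (0:ℝ) < 1/3)
      have h2 := Real.tendsto_log_atTop.eventually h
      filter_upwards [h2, evlog.eventually_ge_atTop 1] with x hx hx1
      simp only [Real.norm_eq_abs, id] at hx
      calc Real.log (Real.log x) ≤ |Real.log (Real.log x)| := le_abs_self _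
        _ ≤ 1/3 * |Real.log x| := hx
        _ = Real.log x / 3 := by rw [abs_of_nonneg (by linarith)]; ring
    filter_upwards [eventually_ge_atTop (1:ℝ),
      eventually_ge_atTop (Real.exp (2 * (σ ^ 2 - μ))),
      evlog.eventually_ge_atTop 1,
      evlog.eventually_ge_atTop (2 * |c₀ + μ|),
      evloglog.eventually_ge_atTop (4 * (c₀ - μ)),
      evloglog.eventually_ge_atTop (8 * σ ^ 2 * (2 * a + 1)),
      evloglog.eventually_ge_atTop 0,
      evsmall] with x hx1 hxe hm1 hm2 hmm1 hmm2 hmm0 hsm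
    set m := Real.log x with hm
    have hx0 : (0:ℝ) < x := lt_of_lt_of_le one_pos hx1
    have hm0 : (0:ℝ) < m := lt_of_lt_of_le one_pos hm1
    set κ := Real.sqrt m with hκ
    have hκ1 : 1 ≤ κ := by
      rw [hκ, show (1:ℝ) = Real.sqrt 1 from (Real.sqrt_one).symm]
      exact Real.sqrt_le_sqrt hm1
    have hκ0 : 0 < κ := lt_of_lt_of_le one_pos hκ1
    set t := κ / x with hts
    have ht0 : 0 < t := div_pos hκ0 hx0
    -- t ≤ exp (μ - σ²)
    have htb : t ≤ Real.exp (μ - σ ^ 2) := by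
      have h1 : κ ≤ Real.sqrt x := Real.sqrt_le_sqrt (by
        have := Real.log_le_sub_one_of_pos hx0; linarith)
      have h2 : Real.sqrt x * Real.sqrt x = x := Real.mul_self_sqrt hx0.le
      have h3 : Real.exp (2 * (σ ^ 2 - μ)) ≤ x := hxe
      have hsx : 0 < Real.sqrt x := Real.sqrt_pos.2 hx0
      rw [hts, div_le_iff₀ hx0]
      calc κ ≤ Real.sqrt x := h1
        _ = x / Real.sqrt x := by field_simp [h2]; exact Real.sq_sqrt hx0.le
        _ ≤ Real.exp (μ - σ ^ 2) * x := by
            rw [div_le_iff₀ hsx]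
            have h4 : Real.exp (σ ^ 2 - μ) ≤ Real.sqrt x := by
              calc Real.exp (σ ^ 2 - μ)
                  = Real.sqrt (Real.exp (σ ^ 2 - μ) ^ 2) := (Real.sqrt_sq (Real.exp_nonneg _)).symm
                _ ≤ Real.sqrt x := Real.sqrt_le_sqrt (by
                    rw [sq, ← Real.exp_add]
                    convert hxe using 2
                    · rfl
                    · ring)
            calc x = 1 * x := (one_mul x).symm
              _ ≤ (Real.exp (μ - σ ^ 2) * Real.sqrt x) * x := by
                  apply mul_le_mul_of_nonneg_right _ hx0.le
                  rw [show (1:ℝ) = Real.exp (μ - σ^2) * Real.exp (σ^2 - μ) by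
                    rw [← Real.exp_add]; simp]
                  exact mul_le_mul_of_nonneg_left h4 (Real.exp_nonneg _)
              _ = Real.exp (μ - σ ^ 2) * x * Real.sqrt x := by ring
    -- main derivation
    have hLa : 0 < lnLaplace μ σ (a * x) := lnLaplace_pos hσ (mul_nonneg ha.le hx0.le)
    have hup := L_upper (μ := μ) hσ ha.le hab.le hx0 ht0 htb
    set w := m / x with hw
    have hw0 : 0 < w := div_pos hm0 hx0
    set Q := m - Real.log m + c₀ with hQdef
    have hlogm : Real.log m ≤ m - 1 := Real.log_le_sub_one_of_pos hm0
    have hQ : ∀ α ∈ Ioc w (2 * w), |Real.log α - μ| ≤ Q := by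
      intro α hα
      have hα0 : 0 < α := lt_trans hw0 hα.1
      have hlogw : Real.log w = Real.log m - m := by
        rw [hw, Real.log_div hm0.ne' hx0.ne']
      have hl1 : Real.log m - m ≤ Real.log α := by
        rw [← hlogw]; exact Real.log_le_log hw0 hα.1.le
      have hl2 : Real.log α ≤ Real.log 2 + (Real.log m - m) := by
        rw [← hlogw, ← Real.log_mul two_ne_zero hw0.ne']
        exact Real.log_le_log hα0 hα.2
      have hμ1 : -|μ| ≤ μ := neg_abs_le μ
      have hμ2 : μ ≤ |μ| := le_abs_self μ
      have hlog2 : (0:ℝ) ≤ Real.log 2 := Real.log_nonneg one_le_two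
      rw [abs_le, hQdef, hc₀]
      constructor <;> [skip; skip] <;> linarith
    have hlow := L_lower (μ := μ) hσ (mul_nonneg ha.le hx0.le) hw0 hQ
    set Cσ := (σ * Real.sqrt (2 * Real.pi))⁻¹ with hCσ
    have hCσ0 : 0 < Cσ := by
      rw [hCσ]; have := sqrt2pi_pos; positivity
    have hwax : 2 * w * (a * x) = 2 * (a * m) := by
      rw [hw]; field_simp
    rw [hwax] at hlow
    -- key : t * pdf t ≤ (2/x) * L(a x)
    have hlogt : Real.log t = Real.log m / 2 - m := by
      rw [hts, Real.log_div hκ0.ne' hx0.ne', hκ, Real.log_sqrt hm0.le, ← hm]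
    set P := m - Real.log m / 2 + μ with hPdef
    have hQP : Q ^ 2 - P ^ 2 ≤ -(2 * σ ^ 2 * m * (2 * a + 1)) := by
      have e1 : Q ^ 2 - P ^ 2 = (Q - P) * (Q + P) := by ring
      have f1 : Q - P ≤ -(Real.log m / 4) := by
        rw [hQdef, hPdef]; linarith
      have f2 : m ≤ Q + P := by
        have hμ3 : -(c₀ + μ) ≤ |c₀ + μ| := neg_le_abs _
        rw [hQdef, hPdef]; linarith
      have f0 : (0:ℝ) ≤ Q + P := le_trans hm0.le f2
      have f3 : (Q - P) * (Q + P) ≤ (-(Real.log m / 4)) * (Q + P) :=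
        mul_le_mul_of_nonneg_right f1 f0
      have f4 : (-(Real.log m / 4)) * (Q + P) ≤ (-(Real.log m / 4)) * m :=
        mul_le_mul_of_nonpos_left f2 (by linarith)
      have f5 : 8 * σ ^ 2 * (2 * a + 1) * m ≤ Real.log m * m :=
        mul_le_mul_of_nonneg_right hmm2 hm0.le
      clear_value Q P
      rw [e1]
      have f6 := f3.trans f4
      linarith [f6, f5]
    have key : t * lognormalPdf μ σ t ≤ (2 / x) * lnLaplace μ σ (a * x) := by
      have h2σ : (0:ℝ) < 2 * σ ^ 2 := by positivity
      have hexp_ineq : -(Real.log t - μ) ^ 2 / (2 * σ ^ 2)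
          ≤ -m + (-(2 * (a * m)) - Q ^ 2 / (2 * σ ^ 2)) := by
        have hP2 : (Real.log t - μ) ^ 2 = P ^ 2 := by
          rw [hlogt, hPdef]; ring
        have hdiv : (Q ^ 2 - P ^ 2) / (2 * σ ^ 2) ≤ -(m * (2 * a + 1)) := by
          rw [div_le_iff₀ h2σ]
          nlinarith [hQP]
        have h9 : Q ^ 2 / (2 * σ ^ 2) - P ^ 2 / (2 * σ ^ 2) ≤ -(m * (2 * a + 1)) := by
          rw [← sub_div]; exact hdiv
        rw [hP2, neg_div]
        linarith [h9]
      have hxinv : (2 / x) = 2 * Real.exp (-m) := by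
        rw [hm, Real.exp_neg, Real.exp_log hx0]
        ring
      calc t * lognormalPdf μ σ t
          = Cσ * Real.exp (-(Real.log t - μ) ^ 2 / (2 * σ ^ 2)) := t_mul_pdf hσ ht0
        _ ≤ Cσ * Real.exp (-m + (-(2 * (a * m)) - Q ^ 2 / (2 * σ ^ 2))) :=
            mul_le_mul_of_nonneg_left (Real.exp_le_exp.2 hexp_ineq) hCσ0.le
        _ = (2 / x) * (Cσ / 2 * Real.exp (-(2 * (a * m)) - Q ^ 2 / (2 * σ ^ 2))) := by
            rw [hxinv, Real.exp_add]; ring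
        _ ≤ (2 / x) * lnLaplace μ σ (a * x) := by
            apply mul_le_mul_of_nonneg_left hlow (by positivity)
    -- assemble
    have htx : (b - a) * t * x = (b - a) * κ := by
      rw [hts]; field_simp
    have hκx : κ = Real.sqrt (Real.log x) := by rw [hκ, hm]
    rw [div_le_iff₀ hLa]
    calc lnLaplace μ σ (b * x)
        ≤ t * lognormalPdf μ σ t + Real.exp (-((b - a) * t * x)) * lnLaplace μ σ (a * x) := hup
      _ = t * lognormalPdf μ σ t
          + Real.exp (-((b - a) * Real.sqrt (Real.log x))) * lnLaplace μ σ (a * x) := by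
          rw [htx, hκx]
      _ ≤ (2 / x) * lnLaplace μ σ (a * x)
          + Real.exp (-((b - a) * Real.sqrt (Real.log x))) * lnLaplace μ σ (a * x) :=
          add_le_add key le_rfl
      _ = (Real.exp (-((b - a) * Real.sqrt (Real.log x))) + 2 / x) * lnLaplace μ σ (a * x) := by
          ring

lemma share_integral_bounds {J : ℕ} (δ : Fin J → ℝ) (hσ : 0 < σ) {p : Fin J → ℝ}
    (hp : ∀ i, 0 < p i) (j : Fin J) {l : ℝ} (hl : 0 < l) :
    (Real.exp (δ j) * lnLaplace μ σ (l * p j)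
      - ∑ k, Real.exp (δ j + δ k) * lnLaplace μ σ (l * (p j + p k))
      ≤ ∫ α in Set.Ioi (0:ℝ), logitShare δ j (l • p) α * lognormalPdf μ σ α)
  ∧ ((∫ α in Set.Ioi (0:ℝ), logitShare δ j (l • p) α * lognormalPdf μ σ α)
      ≤ Real.exp (δ j) * lnLaplace μ σ (l * p j)) := by
  have hshare_eq : ∀ α : ℝ, logitShare δ j (l • p) α
      = Real.exp (δ j - α * (l * p j)) / (1 + ∑ k, Real.exp (δ k - α * (l * p k))) := by
    intro α
    simp [logitShare, Pi.smul_apply, smul_eq_mul]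
  have hS0 : ∀ α : ℝ, 0 ≤ ∑ k, Real.exp (δ k - α * (l * p k)) :=
    fun α => Finset.sum_nonneg fun k _ => (Real.exp_pos _).le
  have hshare_nonneg : ∀ α : ℝ, 0 ≤ logitShare δ j (l • p) α := by
    intro α; rw [hshare_eq α]
    exact div_nonneg (Real.exp_nonneg _) (by linarith [hS0 α])
  have hshare_le : ∀ α : ℝ, logitShare δ j (l • p) α ≤ Real.exp (δ j - α * (l * p j)) := by
    intro α; rw [hshare_eq α]
    exact div_le_self (Real.exp_nonneg _) (by linarith [hS0 α])
  have hshare_ge : ∀ α : ℝ,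
      Real.exp (δ j - α * (l * p j)) * (1 - ∑ k, Real.exp (δ k - α * (l * p k)))
        ≤ logitShare δ j (l • p) α := by
    intro α
    rw [hshare_eq α]
    set S := ∑ k, Real.exp (δ k - α * (l * p k)) with hS
    set A := Real.exp (δ j - α * (l * p j)) with hA
    have h1 : (0:ℝ) < 1 + S := by linarith [hS0 α]
    rw [le_div_iff₀ h1]
    have hAS : 0 ≤ A * S ^ 2 := mul_nonneg (Real.exp_nonneg _) (sq_nonneg _)
    nlinarith [hAS]
  have hmshare : Measurable (fun α => logitShare δ j (l • p) α) := by
    simp only [hshare_eq]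
    apply Measurable.div
    · exact Real.measurable_exp.comp (measurable_const.sub (measurable_id.mul_const _))
    · exact measurable_const.add (Finset.measurable_sum Finset.univ
        (fun k _ => Real.measurable_exp.comp (measurable_const.sub (measurable_id.mul_const _))))
  have hlpj : (0:ℝ) ≤ l * p j := le_of_lt (mul_pos hl (hp j))
  have hIshare : IntegrableOn (fun α => logitShare δ j (l • p) α * lognormalPdf μ σ α)
      (Set.Ioi 0) := by
    apply Integrable.mono' (integrableOn_lnpdf hσ)
      ((hmshare.mul lnpdf_measurable).aestronglyMeasurable.restrict)
    filter_upwards [ae_restrict_mem measurableSet_Ioi] with α hα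
    simp only [Pi.mul_apply]
    rw [Real.norm_eq_abs, abs_of_nonneg (mul_nonneg (hshare_nonneg α) (lnpdf_nonneg hσ hα))]
    calc logitShare δ j (l • p) α * lognormalPdf μ σ α
        ≤ 1 * lognormalPdf μ σ α := by
          apply mul_le_mul_of_nonneg_right _ (lnpdf_nonneg hσ hα)
          rw [hshare_eq α]
          apply div_le_one_of_le₀ _ (by linarith [hS0 α])
          have hmem : Real.exp (δ j - α * (l * p j)) ≤ ∑ k, Real.exp (δ k - α * (l * p k)) :=
            Finset.single_le_sum (f := fun k => Real.exp (δ k - α * (l * p k))) (fun k _ => (Real.exp_pos _).le) (Finset.mem_univ j)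
          linarith
      _ = _ := one_mul _
  have hIright : IntegrableOn (fun α => Real.exp (δ j)
      * (Real.exp (-α * (l * p j)) * lognormalPdf μ σ α)) (Set.Ioi 0) :=
    (integrable_exp_lnpdf hσ hlpj).const_mul _
  constructor
  · -- lower bound
    have hIk : ∀ k : Fin J, IntegrableOn (fun α => Real.exp (δ j + δ k)
        * (Real.exp (-α * (l * (p j + p k))) * lognormalPdf μ σ α)) (Set.Ioi 0) :=
      fun k => (integrable_exp_lnpdf hσ
        (le_of_lt (mul_pos hl (by linarith [hp j, hp k])))).const_mul _
    have hIg : IntegrableOn (fun α => Real.exp (δ j) * (Real.exp (-α * (l * p j)) * lognormalPdf μ σ α)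
        - ∑ k, Real.exp (δ j + δ k) * (Real.exp (-α * (l * (p j + p k))) * lognormalPdf μ σ α))
        (Set.Ioi 0) :=
      hIright.sub (MeasureTheory.integrable_finset_sum Finset.univ (fun k _ => hIk k))
    have heval : (∫ α in Set.Ioi (0:ℝ),
        (Real.exp (δ j) * (Real.exp (-α * (l * p j)) * lognormalPdf μ σ α)
        - ∑ k, Real.exp (δ j + δ k) * (Real.exp (-α * (l * (p j + p k))) * lognormalPdf μ σ α)))
        = Real.exp (δ j) * lnLaplace μ σ (l * p j)
          - ∑ k, Real.exp (δ j + δ k) * lnLaplace μ σ (l * (p j + p k)) := by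
      rw [MeasureTheory.integral_sub hIright
        (MeasureTheory.integrable_finset_sum Finset.univ (fun k _ => hIk k)),
        MeasureTheory.integral_finset_sum Finset.univ (fun k _ => hIk k)]
      congr 1
      · rw [MeasureTheory.integral_const_mul]; rfl
      · exact Finset.sum_congr rfl fun k _ => by rw [MeasureTheory.integral_const_mul]; rfl
    rw [← heval]
    apply setIntegral_mono_on hIg hIshare measurableSet_Ioi
    intro α hα
    have hsum2 : ∑ k, Real.exp (δ j + δ k) * (Real.exp (-α * (l * (p j + p k))) * lognormalPdf μ σ α)
        = (Real.exp (δ j - α * (l * p j)) * ∑ k, Real.exp (δ k - α * (l * p k)))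
            * lognormalPdf μ σ α := by
      rw [Finset.mul_sum, Finset.sum_mul]
      exact Finset.sum_congr rfl fun k _ => by
        rw [← mul_assoc, ← Real.exp_add, ← Real.exp_add]
        congr 2
        ring
    have hfirst : Real.exp (δ j) * (Real.exp (-α * (l * p j)) * lognormalPdf μ σ α)
        = Real.exp (δ j - α * (l * p j)) * lognormalPdf μ σ α := by
      rw [← mul_assoc, ← Real.exp_add]; congr 2; ring
    have hpt : Real.exp (δ j) * (Real.exp (-α * (l * p j)) * lognormalPdf μ σ α)
        - ∑ k, Real.exp (δ j + δ k) * (Real.exp (-α * (l * (p j + p k))) * lognormalPdf μ σ α)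
        = (Real.exp (δ j - α * (l * p j))
            * (1 - ∑ k, Real.exp (δ k - α * (l * p k)))) * lognormalPdf μ σ α := by
      rw [hfirst, hsum2]; ring
    rw [hpt]
    exact mul_le_mul_of_nonneg_right (hshare_ge α) (lnpdf_nonneg hσ hα)
  · -- upper bound
    calc (∫ α in Set.Ioi (0:ℝ), logitShare δ j (l • p) α * lognormalPdf μ σ α)
        ≤ ∫ α in Set.Ioi (0:ℝ),
            Real.exp (δ j) * (Real.exp (-α * (l * p j)) * lognormalPdf μ σ α) := by
          apply setIntegral_mono_on hIshare hIright measurableSet_Ioi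
          intro α hα
          have h1 : logitShare δ j (l • p) α ≤ Real.exp (δ j) * Real.exp (-α * (l * p j)) := by
            rw [← Real.exp_add]
            refine (hshare_le α).trans (le_of_eq ?_)
            congr 1; ring
          calc logitShare δ j (l • p) α * lognormalPdf μ σ α
              ≤ (Real.exp (δ j) * Real.exp (-α * (l * p j))) * lognormalPdf μ σ α :=
                mul_le_mul_of_nonneg_right h1 (lnpdf_nonneg hσ hα)
            _ = _ := mul_assoc _ _ _
      _ = Real.exp (δ j) * lnLaplace μ σ (l * p j) := by
          rw [MeasureTheory.integral_const_mul]; rfl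


end auxiliary

/-- Along any ray `p ∈ ℝ_{++}^J`, `q_j(λp) / (M e^{δ_j} L(λ p_j)) → 1` as `λ → ∞`. -/
theorem qLN_ray_asymptotics {J : ℕ} (hJ : 1 ≤ J) (M : ℝ) (hM : 0 < M) (δ : Fin J → ℝ)
    (μ σ : ℝ) (hσ : 0 < σ) (p : Fin J → ℝ) (hp : ∀ i, 0 < p i) (j : Fin J) :
    Tendsto (fun l : ℝ =>
        qLN δ M μ σ j (l • p) / (M * Real.exp (δ j) * lnLaplace μ σ (l * p j)))
      atTop (nhds 1) := by
  -- lower comparison function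
  set low : ℝ → ℝ := fun l =>
    1 - ∑ k, Real.exp (δ k) * (lnLaplace μ σ (l * (p j + p k)) / lnLaplace μ σ (l * p j))
    with hlowdef
  have hlow_t : Tendsto low atTop (nhds 1) := by
    have hsum : Tendsto (fun l : ℝ =>
        ∑ k, Real.exp (δ k) * (lnLaplace μ σ (l * (p j + p k)) / lnLaplace μ σ (l * p j)))
        atTop (nhds 0) := by
      have : ∀ k : Fin J, Tendsto (fun l : ℝ =>
          Real.exp (δ k) * (lnLaplace μ σ (l * (p j + p k)) / lnLaplace μ σ (l * p j)))
          atTop (nhds 0) := by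
        intro k
        have hcore := L_ratio_tendsto (μ := μ) hσ (hp j)
          (show p j < p j + p k by linarith [hp k])
        have hcomm : (fun l : ℝ => lnLaplace μ σ (l * (p j + p k)) / lnLaplace μ σ (l * p j))
            = fun l : ℝ => lnLaplace μ σ ((p j + p k) * l) / lnLaplace μ σ (p j * l) := by
          funext l; rw [mul_comm l, mul_comm l]
        have := hcore.const_mul (Real.exp (δ k))
        rw [mul_zero] at this
        refine this.congr (fun l => ?_)
        rw [mul_comm l, mul_comm l]
      have := tendsto_finset_sum Finset.univ (fun k _ => this k)
      simpa using this
    have h1 : Tendsto (fun _ : ℝ => (1:ℝ)) atTop (nhds 1) := tendsto_const_nhds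
    have := h1.sub hsum
    rw [sub_zero] at this
    exact this
  apply tendsto_of_tendsto_of_tendsto_of_le_of_le' hlow_t tendsto_const_nhds
  case hgf =>
    filter_upwards [eventually_gt_atTop (0:ℝ)] with l hl
    have hb := share_integral_bounds (μ := μ) δ hσ hp j hl
    have hL0 : 0 < lnLaplace μ σ (l * p j) := lnLaplace_pos hσ (mul_pos hl (hp j)).le
    have hD : 0 < M * Real.exp (δ j) * lnLaplace μ σ (l * p j) := by positivity
    rw [qLN, le_div_iff₀ hD]
    have hexp : low l * (M * Real.exp (δ j) * lnLaplace μ σ (l * p j))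
        = M * (Real.exp (δ j) * lnLaplace μ σ (l * p j)
          - ∑ k, Real.exp (δ j + δ k) * lnLaplace μ σ (l * (p j + p k))) := by
      simp only [hlowdef]
      rw [sub_mul, one_mul, Finset.sum_mul, mul_sub]
      congr 1
      · ring
      · rw [Finset.mul_sum]
        refine Finset.sum_congr rfl fun k _ => ?_
        rw [Real.exp_add]
        field_simp
    rw [hexp]
    exact mul_le_mul_of_nonneg_left hb.1 hM.le
  case hfh =>
    filter_upwards [eventually_gt_atTop (0:ℝ)] with l hl
    have hb := share_integral_bounds (μ := μ) δ hσ hp j hl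
    have hL0 : 0 < lnLaplace μ σ (l * p j) := lnLaplace_pos hσ (mul_pos hl (hp j)).le
    have hD : 0 < M * Real.exp (δ j) * lnLaplace μ σ (l * p j) := by positivity
    rw [qLN, div_le_one hD]
    calc M * ∫ α in Set.Ioi (0:ℝ), logitShare δ j (l • p) α * lognormalPdf μ σ α
        ≤ M * (Real.exp (δ j) * lnLaplace μ σ (l * p j)) :=
          mul_le_mul_of_nonneg_left hb.2 hM.le
      _ = M * Real.exp (δ j) * lnLaplace μ σ (l * p j) := (mul_assoc _ _ _).symm
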